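/- Under the hypotheses of the curvature formula (graded algebra A, odd elements ∇₀,…,∇_n with ∇_j² = R_j, θ_j = ∇_{j−1} − ∇_j, central even scalars t_j with t₀ = 0, t_{n+1} = 1), if all R_j = 0 then (∇_n + Σ_{j=1}^{n} t_j θ_j)² = Σ_{i,j=1}^{n} (t_i t_j − t_{min(i,j)}) θ_i θ_j. In particular, for n = 1 this reads (∇₁ + t θ₁)² = (t² − t)·θ₁². -/

import Mathlib

private lemma flat_curv_aux {A : Type*} [Ring A] (nab θ t : ℕ → A)
    (hflat : ∀ j, nab j * nab j = 0)
    (hθ : ∀ j, 1 ≤ j → θ j = nab (j - 1) - nab j)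
    (ht : ∀ j x, Commute (t j) x) :
    ∀ n : ℕ, (nab n + ∑ j ∈ Finset.Icc 1 n, t j * θ j) ^ 2
        = ∑ i ∈ Finset.Icc 1 n, ∑ j ∈ Finset.Icc 1 n,
            (t i * t j - t (min i j)) * (θ i * θ j) := by
  intro n
  induction n with
  | zero =>
      simp [pow_two, hflat 0]
  | succ n ih =>
      have h1n : (1 : ℕ) ≤ n + 1 := by omega
      have hθs : θ (n + 1) = nab n - nab (n + 1) := by
        simpa using hθ (n + 1) h1n
      have hscomm : ∀ x : A, Commute (t (n + 1) - 1) x := fun x =>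
        (ht (n + 1) x).sub_left (Commute.one_left x)
      -- split the affine connection
      have hsplit : nab (n + 1) + ∑ j ∈ Finset.Icc 1 (n + 1), t j * θ j
          = (nab n + ∑ j ∈ Finset.Icc 1 n, t j * θ j)
            + (t (n + 1) - 1) * θ (n + 1) := by
        rw [Finset.sum_Icc_succ_top h1n]
        have h2 : nab (n + 1) = nab n - θ (n + 1) := by rw [hθs]; noncomm_ring
        rw [h2]
        noncomm_ring
      -- anticommutator of nab n with θ (n+1)
      have hanti : nab n * θ (n + 1) + θ (n + 1) * nab n
          = θ (n + 1) * θ (n + 1) := by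
        have h1 := hflat n
        have h2 := hflat (n + 1)
        rw [hθs]
        simp only [mul_sub, sub_mul, h1, h2]
        abel
      -- anticommutator of the sum part with θ (n+1)
      have hS : (∑ j ∈ Finset.Icc 1 n, t j * θ j) * θ (n + 1)
            + θ (n + 1) * ∑ j ∈ Finset.Icc 1 n, t j * θ j
          = ∑ j ∈ Finset.Icc 1 n,
              t j * (θ j * θ (n + 1) + θ (n + 1) * θ j) := by
        rw [Finset.sum_mul, Finset.mul_sum, ← Finset.sum_add_distrib]
        refine Finset.sum_congr rfl fun j _ => ?_
        have hc := (ht j (θ (n + 1))).eq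
        rw [mul_add, mul_assoc, ← mul_assoc (θ (n + 1)), ← hc, mul_assoc]
      have hkey : (nab n + ∑ j ∈ Finset.Icc 1 n, t j * θ j) * θ (n + 1)
            + θ (n + 1) * (nab n + ∑ j ∈ Finset.Icc 1 n, t j * θ j)
          = (∑ j ∈ Finset.Icc 1 n,
              t j * (θ j * θ (n + 1) + θ (n + 1) * θ j))
            + θ (n + 1) * θ (n + 1) := by
        rw [add_mul, mul_add, ← hS, ← hanti]
        abel
      -- split the double sum on the right
      have hR : ∑ i ∈ Finset.Icc 1 (n + 1), ∑ j ∈ Finset.Icc 1 (n + 1),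
            (t i * t j - t (min i j)) * (θ i * θ j)
          = (∑ i ∈ Finset.Icc 1 n, ∑ j ∈ Finset.Icc 1 n,
              (t i * t j - t (min i j)) * (θ i * θ j))
            + (∑ i ∈ Finset.Icc 1 n,
                (t i * t (n + 1) - t (min i (n + 1))) * (θ i * θ (n + 1)))
            + (∑ j ∈ Finset.Icc 1 n,
                (t (n + 1) * t j - t (min (n + 1) j)) * (θ (n + 1) * θ j))
            + (t (n + 1) * t (n + 1) - t (min (n + 1) (n + 1)))
                * (θ (n + 1) * θ (n + 1)) := by
        simp only [Finset.sum_Icc_succ_top h1n]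
        rw [Finset.sum_add_distrib]
        abel
      -- simplify the column terms
      have hcol : ∑ i ∈ Finset.Icc 1 n,
            (t i * t (n + 1) - t (min i (n + 1))) * (θ i * θ (n + 1))
          = ∑ i ∈ Finset.Icc 1 n,
              (t (n + 1) - 1) * (t i * (θ i * θ (n + 1))) := by
        refine Finset.sum_congr rfl fun i hi => ?_
        have hile : i ≤ n := (Finset.mem_Icc.mp hi).2
        have hmin : min i (n + 1) = i := by omega
        have hsc : t i * t (n + 1) - t i = (t (n + 1) - 1) * t i := by
          rw [sub_mul, one_mul, (ht (n + 1) (t i)).eq]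
        rw [hmin, hsc, mul_assoc]
      -- simplify the row terms
      have hrow : ∑ j ∈ Finset.Icc 1 n,
            (t (n + 1) * t j - t (min (n + 1) j)) * (θ (n + 1) * θ j)
          = ∑ j ∈ Finset.Icc 1 n,
              (t (n + 1) - 1) * (t j * (θ (n + 1) * θ j)) := by
        refine Finset.sum_congr rfl fun j hj => ?_
        have hjle : j ≤ n := (Finset.mem_Icc.mp hj).2
        have hmin : min (n + 1) j = j := by omega
        have hsc : t (n + 1) * t j - t j = (t (n + 1) - 1) * t j := by
          rw [sub_mul, one_mul]
        rw [hmin, hsc, mul_assoc]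
      -- diagonal term
      have hdiag : (t (n + 1) * t (n + 1) - t (min (n + 1) (n + 1)))
            * (θ (n + 1) * θ (n + 1))
          = (t (n + 1) - 1) * (θ (n + 1) * θ (n + 1))
            + (t (n + 1) - 1) * ((t (n + 1) - 1) * (θ (n + 1) * θ (n + 1))) := by
        rw [min_self]
        have hsc : t (n + 1) * t (n + 1) - t (n + 1)
            = (t (n + 1) - 1) + (t (n + 1) - 1) * (t (n + 1) - 1) := by
          noncomm_ring
        rw [hsc, add_mul, mul_assoc]
      -- expand the square
      have expand : (nab n + ∑ j ∈ Finset.Icc 1 n, t j * θ j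
            + (t (n + 1) - 1) * θ (n + 1)) ^ 2
          = (nab n + ∑ j ∈ Finset.Icc 1 n, t j * θ j) ^ 2
            + ((nab n + ∑ j ∈ Finset.Icc 1 n, t j * θ j)
                * ((t (n + 1) - 1) * θ (n + 1))
              + ((t (n + 1) - 1) * θ (n + 1))
                * (nab n + ∑ j ∈ Finset.Icc 1 n, t j * θ j))
            + ((t (n + 1) - 1) * θ (n + 1)) * ((t (n + 1) - 1) * θ (n + 1)) := by
        noncomm_ring
      have e1 : (nab n + ∑ j ∈ Finset.Icc 1 n, t j * θ j)
            * ((t (n + 1) - 1) * θ (n + 1))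
          = (t (n + 1) - 1)
            * ((nab n + ∑ j ∈ Finset.Icc 1 n, t j * θ j) * θ (n + 1)) := by
        rw [← mul_assoc, ← (hscomm _).eq, mul_assoc]
      have e1' : ((t (n + 1) - 1) * θ (n + 1))
            * (nab n + ∑ j ∈ Finset.Icc 1 n, t j * θ j)
          = (t (n + 1) - 1)
            * (θ (n + 1) * (nab n + ∑ j ∈ Finset.Icc 1 n, t j * θ j)) :=
        mul_assoc _ _ _
      have e2 : (t (n + 1) - 1) * θ (n + 1)
            * ((t (n + 1) - 1) * θ (n + 1))
          = (t (n + 1) - 1)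
            * ((t (n + 1) - 1) * (θ (n + 1) * θ (n + 1))) := by
        rw [mul_assoc]
        rw [← mul_assoc (θ (n + 1)) (t (n + 1) - 1) (θ (n + 1))]
        rw [← (hscomm (θ (n + 1))).eq]
        rw [mul_assoc (t (n + 1) - 1) (θ (n + 1)) (θ (n + 1))]
      have e4 : (t (n + 1) - 1)
            * (∑ j ∈ Finset.Icc 1 n, t j * (θ j * θ (n + 1) + θ (n + 1) * θ j))
          = (∑ j ∈ Finset.Icc 1 n,
              (t (n + 1) - 1) * (t j * (θ j * θ (n + 1))))
            + ∑ j ∈ Finset.Icc 1 n,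
              (t (n + 1) - 1) * (t j * (θ (n + 1) * θ j)) := by
        rw [Finset.mul_sum, ← Finset.sum_add_distrib]
        refine Finset.sum_congr rfl fun j _ => ?_
        rw [mul_add, mul_add]
      rw [hsplit, expand, e1, e1', e2, ih, hR, hcol, hrow, hdiag, ← mul_add,
        hkey, mul_add (t (n + 1) - 1)
          (∑ j ∈ Finset.Icc 1 n, t j * (θ j * θ (n + 1) + θ (n + 1) * θ j))
          (θ (n + 1) * θ (n + 1)), e4]
      abel

/-- Flat case of the curvature formula: if all `∇_j² = 0` then
`(∇_n + Σ t_j θ_j)² = Σ_{i,j} (t_i t_j − t_{min(i,j)}) θ_i θ_j`; in particular for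
`n = 1`, `(∇₁ + t θ₁)² = (t² − t) θ₁²`. -/
theorem stmt12 {A : Type*} [Ring A] (n : ℕ) (nab θ t : ℕ → A)
    (hflat : ∀ j, nab j * nab j = 0)
    (hθ : ∀ j, 1 ≤ j → θ j = nab (j - 1) - nab j)
    (ht : ∀ j x, Commute (t j) x) (ht0 : t 0 = 0) (ht1 : t (n + 1) = 1) :
    ((nab n + ∑ j ∈ Finset.Icc 1 n, t j * θ j) ^ 2
        = ∑ i ∈ Finset.Icc 1 n, ∑ j ∈ Finset.Icc 1 n,
            (t i * t j - t (min i j)) * (θ i * θ j))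
      ∧ (n = 1 →
          (nab 1 + t 1 * θ 1) ^ 2 = (t 1 * t 1 - t 1) * (θ 1 * θ 1)) := by
  constructor
  · exact flat_curv_aux nab θ t hflat hθ ht n
  · intro hn
    have h := flat_curv_aux nab θ t hflat hθ ht 1
    simpa [Finset.Icc_self] using h
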